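/- arXiv:2211.07054 — 3 statements merged into one kernel-verified Lean document; each statement's English description precedes it below -/
import Mathlib

section
/- For every homomorphism χ : H → ℚ/ℤ, the corestriction Cor_{H/G}(χ) ∈ H¹(G, ℚ/ℤ) = Hom(G, ℚ/ℤ) — that is, the composition of the transfer homomorphism G → H with χ — is the zero homomorphism. -/
/-- ℚ/ℤ as an additive group. -/
noncomputable abbrev QZ : Type := AddCircle (1 : ℚ)

/-- The rotation subgroup of the dihedral group: the cyclic subgroup of order `n`
consisting of the rotations `r i`. -/
def rotations (n : ℕ) : Subgroup (DihedralGroup n) where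
  carrier := Set.range DihedralGroup.r
  one_mem' := ⟨0, rfl⟩
  mul_mem' := by
    rintro _ _ ⟨i, rfl⟩ ⟨j, rfl⟩
    exact ⟨i + j, (DihedralGroup.r_mul_r i j).symm⟩
  inv_mem' := by
    rintro _ ⟨i, rfl⟩
    exact ⟨-i, rfl⟩

open DihedralGroup in
lemma card_rot (n : ℕ) [NeZero n] : Nat.card (rotations n) = n := by
  have : Nat.card (rotations n) = Nat.card (ZMod n) := by
    apply Nat.card_congr
    exact (Equiv.ofInjective r (by intro a b h; exact r.injEq a b ▸ h ▸ rfl)).symm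
  simpa [Nat.card_zmod] using this

lemma index_rot (n : ℕ) [NeZero n] : (rotations n).index = 2 := by
  have h := Subgroup.index_mul_card (rotations n)
  rw [card_rot, DihedralGroup.nat_card] at h
  exact Nat.eq_of_mul_eq_mul_right (Nat.pos_of_ne_zero (NeZero.ne n)) h

open DihedralGroup in
lemma refl_conj (n : ℕ) (i : ZMod n) (x : DihedralGroup n) :
    x⁻¹ * sr i * x ∉ rotations n := by
  rcases x with j | j <;> rintro ⟨k, hk⟩ <;>
    simp [show (r j)⁻¹ = r (-j) from rfl, show (sr j)⁻¹ = sr j from rfl,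
      r_mul_sr, sr_mul_r, sr_mul_sr] at hk

open DihedralGroup in
lemma transfer_sr (n : ℕ) [NeZero n] (χ : ↥(rotations n) →* Multiplicative (AddCircle (1:ℚ)))
    (i : ZMod n) : MonoidHom.transfer χ (sr i) = 1 := by
  haveI : (rotations n).FiniteIndex := ⟨by rw [index_rot]; omega⟩
  have hsq : (sr i) ^ 2 = 1 := by rw [pow_two, sr_mul_self]
  have hpow : ∀ k : ℕ, (sr i) ^ k = if Even k then 1 else sr i := by
    intro k
    rcases Nat.even_or_odd k with ⟨m, rfl⟩ | ⟨m, rfl⟩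
    · rw [if_pos ⟨m, rfl⟩, ← two_mul, pow_mul, hsq, one_pow]
    · rw [if_neg (by simp [Nat.even_add_one, parity_simps]), pow_succ, two_mul, pow_add,
        ← pow_add, ← two_mul, pow_mul, hsq, one_pow, one_mul]
  have key : ∀ (k : ℕ) (g₀ : DihedralGroup n),
      g₀⁻¹ * (sr i) ^ k * g₀ ∈ rotations n → g₀⁻¹ * (sr i) ^ k * g₀ = (sr i) ^ k := by
    intro k g₀ hmem
    by_cases hk : Even k
    · rw [hpow k, if_pos hk]
      group
    · rw [hpow k, if_neg hk] at hmem
      exact absurd hmem (refl_conj n i g₀)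
  rw [MonoidHom.transfer_eq_pow χ (sr i) key]
  have h1 : (sr i) ^ (rotations n).index = 1 := by rw [index_rot]; exact hsq
  convert map_one χ using 2
  exact Subtype.ext h1

/-- Let `n ≥ 1`, `G` the dihedral group of order `2n` and `H` its rotation
subgroup.  For every homomorphism `χ : H → ℚ/ℤ`, the corestriction
`Cor_{H/G}(χ) ∈ H¹(G, ℚ/ℤ) = Hom(G, ℚ/ℤ)`, i.e. the composition of the transfer map
`G → H` with `χ`, is the zero homomorphism. -/
theorem stmt9 (n : ℕ) [NeZero n] (hn : 1 ≤ n)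
    (χ : ↥(rotations n) →* Multiplicative QZ) :
    MonoidHom.transfer χ = 1 := by
  ext g
  rcases g with i | i
  · have : DihedralGroup.r i = DihedralGroup.sr 0 * DihedralGroup.sr i := by
      rw [DihedralGroup.sr_mul_sr, sub_zero]
    rw [this, map_mul, transfer_sr, transfer_sr, one_mul, MonoidHom.one_apply]
  · rw [transfer_sr, MonoidHom.one_apply]
end

section
/- For every cyclic subgroup C of G, the cohomology group H²(C, T) vanishes, where C acts on T by restriction of the G-action. In particular, every class in H²(G, T) restricts to zero on every cyclic subgroup of G, i.e. Ш²_ω(G, T) = H²(G, T). -/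
namespace Normic

/-- For a `Γ`-set `α`, the permutation module of `M`-valued functions on `α`:
`Γ` acts by `(g • f) x = f (g⁻¹ • x)`.  For `M = ℤ` and a finite `Γ`-set `α` this is
the permutation lattice `ℤ[α]`. -/
instance funAction (Γ α M : Type*) [Group Γ] [MulAction Γ α] [AddCommGroup M] :
    DistribMulAction Γ (α → M) where
  smul g f := fun x => f (g⁻¹ • x)
  one_smul f := by funext x; show f _ = f x; rw [inv_one, one_smul]
  mul_smul g h f := by funext x; show f _ = f _; rw [mul_inv_rev, mul_smul]
  smul_zero g := rfl
  smul_add g f₁ f₂ := rfl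

lemma funAction_smul_apply {Γ α M : Type*} [Group Γ] [MulAction Γ α] [AddCommGroup M]
    (g : Γ) (f : α → M) (x : α) : (g • f) x = f (g⁻¹ • x) := rfl

section Cocycles

variable {Γ : Type*} [Group Γ] {M : Type*} [AddCommGroup M] [DistribMulAction Γ M]

/-- Inhomogeneous 1-cocycles of `Γ` with values in `M`. -/
def IsOneCocycle (f : Γ → M) : Prop := ∀ g h : Γ, f (g * h) = g • f h + f g

/-- 1-coboundaries of `Γ` with values in `M`. -/
def IsOneCoboundary (f : Γ → M) : Prop := ∃ m : M, ∀ g : Γ, f g = g • m - m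

/-- Inhomogeneous 2-cocycles of `Γ` with values in `M`. -/
def IsTwoCocycle (f : Γ → Γ → M) : Prop :=
  ∀ g h k : Γ, g • f h k - f (g * h) k + f g (h * k) - f g h = 0

/-- 2-coboundaries of `Γ` with values in `M`. -/
def IsTwoCoboundary (f : Γ → Γ → M) : Prop :=
  ∃ a : Γ → M, ∀ g h : Γ, f g h = g • a h - a (g * h) + a g

theorem normalized_isTwoCoboundary (s : Γ) (n : ℕ) (hn : 0 < n) (hsn : s ^ n = 1)
    (hdvd : ∀ k : ℕ, s ^ k = 1 → n ∣ k)
    (hgen : ∀ x : Γ, ∃ k : ℕ, s ^ k = x)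
    (hfix : ∀ u : M, s • u = u → ∃ v : M, ∑ i ∈ Finset.range n, s ^ i • v = u)
    (f : Γ → Γ → M) (hf : IsTwoCocycle f)
    (hf1 : ∀ k : Γ, f 1 k = 0) (hfg1 : ∀ g : Γ, f g 1 = 0) :
    IsTwoCoboundary f := by
  classical
  -- the invariant u = ∑ f(sⁱ, s) is fixed by s
  have hsu : s • (∑ i ∈ Finset.range n, f (s ^ i) s) = ∑ i ∈ Finset.range n, f (s ^ i) s := by
    have key : ∀ i : ℕ, s • f (s ^ i) s
        = f (s ^ (i + 1)) s - (f s (s ^ (i + 1)) - f s (s ^ i)) := by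
      intro i
      have h1 := hf s (s ^ i) s
      rw [← pow_succ' s i, ← pow_succ s i] at h1
      linear_combination (norm := abel1) h1
    rw [Finset.smul_sum, Finset.sum_congr rfl fun i _ => key i, Finset.sum_sub_distrib,
      Finset.sum_range_sub (fun i => f s (s ^ i)) n, hsn, pow_zero, sub_self, sub_zero]
    have h1 := Finset.sum_range_succ' (fun i => f (s ^ i) s) n
    have h2 := Finset.sum_range_succ (fun i => f (s ^ i) s) n
    rw [h2, pow_zero, hf1, add_zero, hsn, hf1, add_zero] at h1
    exact h1.symm
  obtain ⟨m, hm⟩ := hfix _ hsu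
  -- the partial sums
  set B : ℕ → M := fun k => ∑ i ∈ Finset.range k, (f (s ^ i) s - s ^ i • m) with hB
  have hB0 : B 0 = 0 := Finset.sum_range_zero _
  have hBsucc : ∀ k, B (k + 1) = B k + (f (s ^ k) s - s ^ k • m) :=
    fun k => Finset.sum_range_succ _ k
  have hBn : B n = 0 := by
    rw [hB]
    simp only [Finset.sum_sub_distrib, hm, sub_self]
  have key2 : ∀ b a : ℕ, B (a + b) = B a + s ^ a • B b + f (s ^ a) (s ^ b) := by
    intro b
    induction b with
    | zero =>
      intro a
      rw [Nat.add_zero, hB0, smul_zero, add_zero, pow_zero, hfg1, add_zero]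
    | succ b ih =>
      intro a
      have e : a + (b + 1) = (a + b) + 1 := rfl
      rw [e, hBsucc (a + b), ih a, hBsucc b]
      have hsm : s ^ a • s ^ b • m = s ^ (a + b) • m := by rw [← mul_smul, ← pow_add]
      have h1 := hf (s ^ a) (s ^ b) s
      rw [← pow_add, ← pow_succ] at h1
      simp only [smul_add, smul_sub]
      rw [hsm]
      symm
      linear_combination (norm := abel1) h1
  have hper : ∀ t j : ℕ, B (j + n * t) = B j := by
    intro t
    induction t with
    | zero => intro j; rw [Nat.mul_zero, Nat.add_zero]
    | succ t ih =>
      intro j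
      have e : j + n * (t + 1) = (j + n * t) + n := by ring
      rw [e, key2 n (j + n * t), hBn, smul_zero, add_zero, hsn, hfg1, add_zero, ih]
  have hwd : ∀ j k : ℕ, s ^ j = s ^ k → B j = B k := by
    have aux : ∀ j k : ℕ, j ≤ k → s ^ j = s ^ k → B j = B k := by
      intro j k hjk he
      obtain ⟨d, rfl⟩ := Nat.exists_eq_add_of_le hjk
      have hd : s ^ d = 1 := by
        have : s ^ j * s ^ d = s ^ j * 1 := by rw [mul_one, ← pow_add, ← he]
        exact mul_left_cancel this
      obtain ⟨t, rfl⟩ := hdvd d hd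
      exact (hper t j).symm
    intro j k he
    rcases le_total j k with h | h
    · exact aux j k h he
    · exact (aux k j h he.symm).symm
  choose κ hκ using hgen
  refine ⟨fun x => -B (κ x), ?_⟩
  intro g h
  have e1 : B (κ (g * h)) = B (κ g + κ h) := hwd _ _ (by rw [hκ, pow_add, hκ, hκ])
  have e2 := key2 (κ h) (κ g)
  rw [hκ g, hκ h] at e2
  have e3 : B (κ (g * h)) = B (κ g) + g • B (κ h) + f g h := by rw [e1, e2]
  show f g h = g • -B (κ h) - -B (κ (g * h)) + -B (κ g)
  rw [e3]
  simp only [smul_neg]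
  abel

theorem cyclic_isTwoCoboundary (s : Γ) (n : ℕ) (hn : 0 < n) (hsn : s ^ n = 1)
    (hdvd : ∀ k : ℕ, s ^ k = 1 → n ∣ k)
    (hgen : ∀ x : Γ, ∃ k : ℕ, s ^ k = x)
    (hfix : ∀ u : M, s • u = u → ∃ v : M, ∑ i ∈ Finset.range n, s ^ i • v = u)
    (f : Γ → Γ → M) (hf : IsTwoCocycle f) : IsTwoCoboundary f := by
  have hf1c : ∀ k : Γ, f 1 k = f 1 1 := by
    intro k
    have h1 := hf 1 1 k
    simp only [one_smul, one_mul] at h1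
    linear_combination (norm := abel1) h1
  have hfg1c : ∀ g : Γ, f g 1 = g • f 1 1 := by
    intro g
    have h1 := hf g 1 1
    simp only [mul_one, one_mul] at h1
    symm
    linear_combination (norm := abel1) h1
  have hF : IsTwoCocycle (fun g h => f g h - g • f 1 1) := by
    intro g h k
    have h1 := hf g h k
    have h2 : g • h • f 1 1 = (g * h) • f 1 1 := (mul_smul g h (f 1 1)).symm
    simp only [smul_sub]
    rw [h2]
    linear_combination (norm := abel1) h1
  obtain ⟨a, ha⟩ := normalized_isTwoCoboundary s n hn hsn hdvd hgen hfix _ hF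
    (fun k => by simp only [hf1c k, one_smul, sub_self])
    (fun g => by simp only [hfg1c g, sub_self])
  refine ⟨fun x => a x + f 1 1, ?_⟩
  intro g h
  have h1 : f g h - g • f 1 1 = g • a h - a (g * h) + a g := ha g h
  simp only [smul_add]
  linear_combination (norm := abel1) h1


end Cocycles

section NormOne

variable (G : Type*) [Group G]

/-- The norm element `N_G = Σ_{g∈G} g` of the regular module `ℤ[G] = (G → ℤ)`:
the constant function `1`. -/
def normElt : G → ℤ := fun _ => (1 : ℤ)

/-- The character lattice of the norm-one torus: `T = ℤ[G]/(ℤ·N_G)`, the quotient of the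
regular module by the subgroup generated by the norm element. -/
abbrev TT := (G → ℤ) ⧸ AddSubgroup.zmultiples (normElt G)

lemma smul_normElt (g : G) : g • normElt G = normElt G := rfl

instance : SMul G (TT G) :=
  ⟨fun g => QuotientAddGroup.map _ _ (DistribMulAction.toAddMonoidHom (G → ℤ) g) (by
    intro d hd
    obtain ⟨k, rfl⟩ := AddSubgroup.mem_zmultiples_iff.mp hd
    refine AddSubgroup.mem_comap.mpr (AddSubgroup.mem_zmultiples_iff.mpr ⟨k, ?_⟩)
    show k • normElt G = g • k • normElt G
    rfl)⟩

lemma TT_smul_mk (g : G) (d : G → ℤ) :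
    g • (QuotientAddGroup.mk d : TT G) = QuotientAddGroup.mk (g • d) := rfl

/-- The `G`-action on `T = ℤ[G]/(ℤ·N_G)`. -/
instance : DistribMulAction G (TT G) where
  one_smul x := by
    induction x using QuotientAddGroup.induction_on with
    | H d => rw [TT_smul_mk, one_smul]
  mul_smul g g' x := by
    induction x using QuotientAddGroup.induction_on with
    | H d => rw [TT_smul_mk, TT_smul_mk, TT_smul_mk, mul_smul]
  smul_zero g :=
    map_zero (QuotientAddGroup.map _ _ (DistribMulAction.toAddMonoidHom (G → ℤ) g) _)
  smul_add g x y :=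
    map_add (QuotientAddGroup.map _ _ (DistribMulAction.toAddMonoidHom (G → ℤ) g) _) x y

end NormOne

section TTfixS
variable (G : Type*) [Group G] [Finite G]

theorem TT_fix (s : G) (u : TT G) (hu : s • u = u) :
    ∃ v : TT G, ∑ i ∈ Finset.range (orderOf s), s ^ i • v = u := by
  classical
  set n := orderOf s with hn
  have hn0 : 0 < n := orderOf_pos s
  have hsn : s ^ n = 1 := pow_orderOf_eq_one s
  induction u using QuotientAddGroup.induction_on with
  | H d =>
  rw [TT_smul_mk] at hu
  have hmem : -(s • d) + d ∈ AddSubgroup.zmultiples (normElt G) :=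
    (QuotientAddGroup.eq).mp hu
  obtain ⟨k, hk⟩ := AddSubgroup.mem_zmultiples_iff.mp hmem
  -- show k = 0, hence s • d = d
  have hsd : s • d = d := by
    have htel : ∑ i ∈ Finset.range n, (s ^ (i + 1) • d - s ^ i • d) = 0 := by
      rw [Finset.sum_range_sub (fun i => s ^ i • d) n, hsn, pow_zero, one_smul, sub_self]
    have hterm : ∀ i : ℕ, s ^ (i + 1) • d - s ^ i • d = -(k • normElt G) := by
      intro i
      rw [pow_succ, mul_smul, ← smul_sub]
      have : s • d - d = -(k • normElt G) := by
        rw [hk]; abel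
      rw [this]
      have h2 : s ^ i • (k • normElt G) = k • (s ^ i • normElt G) :=
        map_zsmul (DistribMulAction.toAddMonoidHom (G → ℤ) (s ^ i)) k (normElt G)
      rw [smul_neg, h2]
      rfl
    rw [Finset.sum_congr rfl (fun i _ => hterm i), Finset.sum_const, Finset.card_range] at htel
    have hk0 : k = 0 := by
      have h1 := congrFun htel (1 : G)
      have h2 : (n : ℤ) * -k = 0 := by
        simpa [normElt, nsmul_eq_mul] using h1
      rcases mul_eq_zero.mp h2 with h | h
      · exact absurd h (by exact_mod_cast hn0.ne')
      · omega
    rw [hk0, zero_smul] at hk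
    exact neg_add_eq_zero.mp hk.symm
  -- d is constant on ⟨s⟩-orbits
  have hpow : ∀ i : ℕ, s ^ i • d = d := by
    intro i
    induction i with
    | zero => rw [pow_zero, one_smul]
    | succ i ih => rw [pow_succ, mul_smul, hsd, ih]
  have hdpt : ∀ (i : ℕ) (x : G), d ((s ^ i)⁻¹ * x) = d x := by
    intro i x
    have := congrFun (hpow i) x
    rwa [funAction_smul_apply, smul_eq_mul] at this
  -- orbit representatives
  let Z := Subgroup.zpowers s
  let rep : G → G := fun x => (Quotient.mk (MulAction.orbitRel ↥Z G) x).out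
  have hrep_orb : ∀ x : G, rep x ∈ MulAction.orbit (↥Z) x :=
    fun x => Quotient.mk_out (s := MulAction.orbitRel ↥Z G) x
  have hrepinv : ∀ (i : ℕ) (x : G), rep ((s ^ i)⁻¹ * x) = rep x := by
    intro i x
    have hr : MulAction.orbitRel ↥Z G ((s ^ i)⁻¹ * x) x := by
      refine MulAction.orbitRel_apply.mpr ⟨⟨(s ^ i)⁻¹, inv_mem (Subgroup.pow_mem Z (Subgroup.mem_zpowers s) i)⟩, ?_⟩
      rfl
    show (Quotient.mk _ ((s ^ i)⁻¹ * x)).out = (Quotient.mk _ x).out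
    rw [Quotient.sound hr]
  have hrep_rep : ∀ x : G, rep (rep x) = rep x := by
    intro x
    show (Quotient.mk _ (rep x)).out = (Quotient.mk _ x).out
    congr 1
    exact Quotient.sound (MulAction.orbitRel_apply.mpr (hrep_orb x))
  -- for each x, a unique exponent i < n with (s^i)⁻¹ * x = rep x
  have hexists : ∀ x : G, ∃ i : ℕ, i < n ∧ (s ^ i)⁻¹ * x = rep x := by
    intro x
    obtain ⟨c, hc⟩ := hrep_orb x
    obtain ⟨z, hz⟩ := Subgroup.mem_zpowers_iff.mp c.2
    have hnz : ((n : ℤ)) ≠ 0 := by exact_mod_cast hn0.ne'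
    have h1 : 0 ≤ (-z) % (n : ℤ) := Int.emod_nonneg _ hnz
    have h2 : (-z) % (n : ℤ) < (n : ℤ) := Int.emod_lt_of_pos _ (by exact_mod_cast hn0)
    refine ⟨((-z) % (n : ℤ)).toNat, by omega, ?_⟩
    have hdiv := Int.emod_add_mul_ediv (-z) (n : ℤ)
    have hdvd2 : ((n : ℤ)) ∣ ((((-z) % (n : ℤ)).toNat : ℤ) + z) := by
      refine ⟨-((-z) / (n : ℤ)), ?_⟩
      rw [Int.toNat_of_nonneg h1]
      linarith
    have hone : s ^ ((((-z) % (n : ℤ)).toNat : ℤ) + z) = 1 :=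
      orderOf_dvd_iff_zpow_eq_one.mp hdvd2
    have hzz : s ^ z = (s ^ (((-z) % (n : ℤ)).toNat))⁻¹ := by
      rw [zpow_add] at hone
      rw [← zpow_natCast s (((-z) % (n : ℤ)).toNat)]
      exact (inv_eq_of_mul_eq_one_right hone).symm
    rw [← hc]
    show (s ^ (((-z) % (n : ℤ)).toNat))⁻¹ * x = c • x
    have hcx : c • x = (↑c : G) * x := rfl
    rw [hcx, ← hz, hzz]
  have huniq : ∀ (x : G) (i j : ℕ), i < n → j < n →
      (s ^ i)⁻¹ * x = (s ^ j)⁻¹ * x → i = j := by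
    intro x i j hi hj hij
    have h1 : (s ^ i)⁻¹ = (s ^ j)⁻¹ := mul_right_cancel hij
    exact pow_injOn_Iio_orderOf (Set.mem_Iio.mpr hi) (Set.mem_Iio.mpr hj) (inv_injective h1)
  -- the element e supported on representatives
  let e : G → ℤ := fun y => if rep y = y then d y else 0
  have hNe : (∑ i ∈ Finset.range n, s ^ i • e) = d := by
    funext x
    obtain ⟨i₀, hi₀n, hi₀⟩ := hexists x
    rw [Finset.sum_apply]
    have hterm2 : ∀ i : ℕ, (s ^ i • e) x = e ((s ^ i)⁻¹ * x) := by
      intro i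
      rw [funAction_smul_apply, smul_eq_mul]
    rw [Finset.sum_congr rfl (fun i _ => hterm2 i)]
    rw [Finset.sum_eq_single_of_mem i₀ (Finset.mem_range.mpr hi₀n)]
    · show (if rep ((s ^ i₀)⁻¹ * x) = (s ^ i₀)⁻¹ * x then d ((s ^ i₀)⁻¹ * x) else 0) = d x
      rw [if_pos (by rw [hrepinv, hi₀])]
      exact hdpt i₀ x
    · intro j hj hne
      show (if rep ((s ^ j)⁻¹ * x) = (s ^ j)⁻¹ * x then d ((s ^ j)⁻¹ * x) else 0) = 0
      rw [if_neg]
      intro hcontra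
      rw [hrepinv, ← hi₀] at hcontra
      exact hne (huniq x i₀ j hi₀n (Finset.mem_range.mp hj) hcontra).symm
  refine ⟨QuotientAddGroup.mk e, ?_⟩
  have hmk : ∀ i : ℕ, s ^ i • (QuotientAddGroup.mk e : TT G)
      = QuotientAddGroup.mk (s ^ i • e) := fun i => TT_smul_mk G (s ^ i) e
  rw [Finset.sum_congr rfl (fun i _ => hmk i)]
  have hms := (map_sum (QuotientAddGroup.mk' (AddSubgroup.zmultiples (normElt G)))
    (fun i => s ^ i • e) (Finset.range n)).symm
  simp only [QuotientAddGroup.mk'_apply] at hms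
  rw [hms, hNe]


end TTfixS

/-- Let `G` be a finite group and `T = ℤ[G]/(ℤ·N_G)` the character lattice
of the norm-one torus of `G`.  For every cyclic subgroup `C` of `G`, `H²(C, T) = 0`
(every 2-cocycle of `C` with values in `T` is a 2-coboundary); in particular every class
in `H²(G, T)` restricts to zero on every cyclic subgroup, i.e. `Ш²_ω(G, T) = H²(G, T)`. -/
theorem stmt15 (G : Type) [Group G] [Finite G] :
    (∀ C : Subgroup G, IsCyclic ↥C →
      ∀ f : ↥C → ↥C → TT G, IsTwoCocycle f → IsTwoCoboundary f) ∧
    (∀ f : G → G → TT G, IsTwoCocycle f → ∀ C : Subgroup G, IsCyclic ↥C →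
      IsTwoCoboundary (fun a b : ↥C => f ↑a ↑b)) := by
  have part1 : ∀ C : Subgroup G, IsCyclic ↥C →
      ∀ f : ↥C → ↥C → TT G, IsTwoCocycle f → IsTwoCoboundary f := by
    intro C hC f hf
    obtain ⟨σ, hσ⟩ := hC.exists_generator
    have hordcoe : orderOf (σ : G) = orderOf σ :=
      orderOf_injective C.subtype (Subgroup.subtype_injective C) σ
    refine cyclic_isTwoCoboundary σ (orderOf σ) (orderOf_pos σ) (pow_orderOf_eq_one σ)
      (fun k hk => orderOf_dvd_of_pow_eq_one hk)
      (fun x => (Submonoid.mem_powers_iff x σ).mp (mem_powers_iff_mem_zpowers.mpr (hσ x)))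
      (fun u hu => ?_) f hf
    have hu' : (↑σ : G) • u = u := hu
    obtain ⟨v, hv⟩ := TT_fix G (↑σ : G) u hu'
    refine ⟨v, ?_⟩
    rw [← hordcoe] at *
    have : ∀ i : ℕ, σ ^ i • v = ((↑σ : G)) ^ i • v := fun i => rfl
    rw [Finset.sum_congr rfl (fun i _ => this i)]
    exact hv
  refine ⟨part1, fun f hf C hC => part1 C hC _ ?_⟩
  intro g h k
  have h1 := hf ↑g ↑h ↑k
  have e1 : ((g * h : ↥C) : G) = (↑g : G) * ↑h := rfl
  have e2 : ((h * k : ↥C) : G) = (↑h : G) * ↑k := rfl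
  show (↑g : G) • f ↑h ↑k - f ↑(g * h) ↑k + f ↑g ↑(h * k) - f ↑g ↑h = 0
  rw [e1, e2]
  exact h1

end Normic
end

section
/- Let Q be a finite group and E a subgroup of Q, and let ℤ[Q/E] be the permutation module on the left cosets Q/E with Q acting by translation. If a class α ∈ H²(Q, ℤ[Q/E]) restricts to zero in H²(C, ℤ[Q/E]) for every cyclic subgroup C of Q, then α = 0; that is, Ш²_ω(Q, ℤ[Q/E]) = 0. -/
namespace Normic

lemma step2 {G : Type*} [Group G] [Fintype G] (c : G → G → ℤ)
    (hc : ∀ g h k : G, c h k - c (g * h) k + c g (h * k) - c g h = 0)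
    (hcyc : ∀ g : G, ∃ b : G → ℤ,
      ∀ i j : ℤ, c (g ^ i) (g ^ j) = b (g ^ j) - b (g ^ (i + j)) + b (g ^ i)) :
    ∃ β : G → ℤ, ∀ g h : G, c g h = β h - β (g * h) + β g := by
  classical
  set n : ℕ := Fintype.card G with hn
  have hn0 : (n : ℤ) ≠ 0 := Int.natCast_ne_zero.mpr Fintype.card_ne_zero
  set S : G → ℤ := fun g => ∑ h : G, c g h with hS
  have hSrel : ∀ g h : G, (n : ℤ) * c g h = S h - S (g * h) + S g := by
    intro g h
    have h1 : ∑ k : G, (c h k - c (g * h) k + c g (h * k) - c g h) = 0 := by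
      simp [hc g h]
    have h2 : ∑ k : G, c g (h * k) = S g :=
      Fintype.sum_equiv (Equiv.mulLeft h) _ _ (fun k => rfl)
    have h3 : ∑ k : G, (c h k - c (g * h) k + c g (h * k) - c g h)
        = S h - S (g * h) + (∑ k : G, c g (h * k)) - (n : ℤ) * c g h := by
      rw [Finset.sum_sub_distrib, Finset.sum_add_distrib, Finset.sum_sub_distrib,
        Finset.sum_const, Finset.card_univ, nsmul_eq_mul]
    rw [h3, h2] at h1
    linarith
  have hone : ∀ k : G, c 1 k = c 1 1 := by
    intro k
    have h := hc 1 1 k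
    rw [one_mul, one_mul] at h
    linarith
  choose b hb using hcyc
  have key : ∀ g : G, S g = (n : ℤ) * b g g := by
    intro g
    set T : ℤ → ℤ := fun i => S (g ^ i) - (n : ℤ) * b g (g ^ i) with hT
    have hadd : ∀ i j : ℤ, T (i + j) = T i + T j := by
      intro i j
      have h1 := hSrel (g ^ i) (g ^ j)
      have h2 : (n : ℤ) * c (g ^ i) (g ^ j)
          = (n : ℤ) * b g (g ^ j) - (n : ℤ) * b g (g ^ (i + j)) + (n : ℤ) * b g (g ^ i) := by
        rw [hb g i j]; ring
      have h3 : g ^ i * g ^ j = g ^ (i + j) := (zpow_add g i j).symm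
      rw [h3] at h1
      simp only [hT]
      linarith
    have hzero : T 0 = 0 := by have := hadd 0 0; simp at this; linarith
    have hnat : ∀ m : ℕ, T (m : ℤ) = (m : ℤ) * T 1 := by
      intro m
      induction m with
      | zero => simpa using hzero
      | succ k ih =>
          have := hadd (k : ℤ) 1
          push_cast
          push_cast at this ih
          rw [this, ih]; ring
    have hgn : g ^ ((n : ℕ) : ℤ) = 1 := by
      rw [zpow_natCast]; exact pow_card_eq_one
    have hb00 : b g (1 : G) = c 1 1 := by
      have := hb g 0 0
      simp only [zpow_zero, add_zero] at this
      linarith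
    have hS1 : S 1 = (n : ℤ) * c 1 1 := by
      have : S 1 = ∑ _k : G, c 1 1 := Finset.sum_congr rfl (fun k _ => hone k)
      rw [this, Finset.sum_const, Finset.card_univ, nsmul_eq_mul]
    have hTn : T ((n : ℕ) : ℤ) = 0 := by
      simp only [hT, hgn, hS1, hb00]; ring
    have hT1 : T 1 = 0 := by
      have := hnat n
      rw [hTn] at this
      rcases mul_eq_zero.mp this.symm with h | h
      · exact absurd h hn0
      · exact h
    have := hT1
    simp only [hT, zpow_one] at this
    linarith
  refine ⟨fun g => b g g, ?_⟩
  intro g h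
  have h1 := hSrel g h
  rw [key h, key (g * h), key g] at h1
  have h2 : (n : ℤ) * c g h = (n : ℤ) * (b h h - b (g * h) (g * h) + b g g) := by
    rw [h1]; ring
  exact mul_left_cancel₀ hn0 h2

/-- Let `Q` be a finite group, `E ≤ Q` a subgroup, and `ℤ[Q/E]` the
permutation module on the cosets `Q/E` (realized as `ℤ`-valued functions on `Q/E`, with
`Q` acting by translation).  If a class in `H²(Q, ℤ[Q/E])` restricts to zero on every
cyclic subgroup of `Q` then it is zero, i.e. `Ш²_ω(Q, ℤ[Q/E]) = 0`.  (Expressed via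
cocycles: a 2-cocycle whose restriction to every cyclic subgroup is a coboundary is
itself a coboundary.) -/
theorem stmt17 (Q : Type) [Group Q] [Finite Q] (E : Subgroup Q)
    (f : Q → Q → ((Q ⧸ E) → ℤ)) (hf : IsTwoCocycle f)
    (hres : ∀ C : Subgroup Q, IsCyclic ↥C →
      IsTwoCoboundary (fun a b : ↥C => f ↑a ↑b)) :
    IsTwoCoboundary f := by
  classical
  letI : Fintype ↥E := Fintype.ofFinite ↥E
  -- pointwise version of the cocycle identity
  have hco : ∀ a b c : Q, ∀ x : Q ⧸ E,
      f b c (a⁻¹ • x) - f (a * b) c x + f a (b * c) x - f a b x = 0 := by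
    intro a b c x
    have h := congrFun (hf a b c) x
    simpa [funAction_smul_apply, Pi.sub_apply, Pi.add_apply] using h
  set e0 : Q ⧸ E := ((1 : Q) : Q ⧸ E) with he0
  have hfix : ∀ q : Q, q ∈ E → q⁻¹ • e0 = e0 := by
    intro q hq
    rw [he0, MulAction.Quotient.smul_mk]
    refine (QuotientGroup.eq).mpr ?_
    simpa using hq
  -- section of the projection
  set s : Q ⧸ E → Q := fun x => x.out with hsdef
  have hs : ∀ x : Q ⧸ E, ((s x : Q) : Q ⧸ E) = x := fun x => QuotientGroup.out_eq' x
  have hsx : ∀ x : Q ⧸ E, (s x)⁻¹ • x = e0 := by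
    intro x
    have h : (s x)⁻¹ • ((s x : Q) : Q ⧸ E) = e0 := by
      rw [MulAction.Quotient.smul_mk]
      simp [he0]
    rwa [hs x] at h
  have hsy : ∀ x : Q ⧸ E, (s x) • e0 = x := by
    intro x
    rw [← hsx x, smul_inv_smul]
  -- the E-valued cocycle ε
  have hmem : ∀ (g : Q) (x : Q ⧸ E), (s x)⁻¹ * g * s (g⁻¹ • x) ∈ E := by
    intro g x
    have h1 : ((g * s (g⁻¹ • x) : Q) : Q ⧸ E) = ((s x : Q) : Q ⧸ E) := by
      rw [hs]
      calc ((g * s (g⁻¹ • x) : Q) : Q ⧸ E) = g • ((s (g⁻¹ • x) : Q) : Q ⧸ E) := rfl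
        _ = g • (g⁻¹ • x) := by rw [hs]
        _ = x := smul_inv_smul g x
    have h2 := (QuotientGroup.eq).mp h1.symm
    rwa [← mul_assoc] at h2
  -- the restricted cocycle on E
  set c : ↥E → ↥E → ℤ := fun a b => f ↑a ↑b e0 with hcdef
  have hcE : ∀ g h k : ↥E, c h k - c (g * h) k + c g (h * k) - c g h = 0 := by
    intro g h k
    have h1 := hco ↑g ↑h ↑k e0
    rw [hfix ↑g g.2] at h1
    simpa [hcdef] using h1
  have hcycE : ∀ g : ↥E, ∃ b : ↥E → ℤ,
      ∀ i j : ℤ, c (g ^ i) (g ^ j) = b (g ^ j) - b (g ^ (i + j)) + b (g ^ i) := by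
    intro g
    have hCcyc : IsCyclic ↥(Subgroup.zpowers (g : Q)) := by
      refine ⟨⟨⟨(g : Q), Subgroup.mem_zpowers _⟩, fun x => ?_⟩⟩
      obtain ⟨k, hk⟩ := Subgroup.mem_zpowers_iff.mp x.2
      refine Subgroup.mem_zpowers_iff.mpr ⟨k, ?_⟩
      ext
      simpa [SubgroupClass.coe_zpow] using hk
    obtain ⟨a, ha⟩ := hres (Subgroup.zpowers (g : Q)) hCcyc
    refine ⟨fun e => if h : (e : Q) ∈ Subgroup.zpowers (g : Q) then a ⟨e, h⟩ e0 else 0, ?_⟩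
    intro i j
    have mi : (g : Q) ^ i ∈ Subgroup.zpowers (g : Q) := Subgroup.zpow_mem_zpowers _ _
    have mj : (g : Q) ^ j ∈ Subgroup.zpowers (g : Q) := Subgroup.zpow_mem_zpowers _ _
    have mij : (g : Q) ^ (i + j) ∈ Subgroup.zpowers (g : Q) := Subgroup.zpow_mem_zpowers _ _
    have h1 := congrFun (ha ⟨(g : Q) ^ i, mi⟩ ⟨(g : Q) ^ j, mj⟩) e0
    have hmul : (⟨(g : Q) ^ i, mi⟩ * ⟨(g : Q) ^ j, mj⟩ :
        ↥(Subgroup.zpowers (g : Q))) = ⟨(g : Q) ^ (i + j), mij⟩ := by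
      ext; simp [zpow_add]
    have hsm : ((⟨(g : Q) ^ i, mi⟩ : ↥(Subgroup.zpowers (g : Q))) •
        a ⟨(g : Q) ^ j, mj⟩) e0 = a ⟨(g : Q) ^ j, mj⟩ e0 := by
      change a ⟨(g : Q) ^ j, mj⟩ (((⟨(g : Q) ^ i, mi⟩ : ↥(Subgroup.zpowers (g : Q)))⁻¹ • e0)) = _
      have : ((⟨(g : Q) ^ i, mi⟩ : ↥(Subgroup.zpowers (g : Q)))⁻¹ • e0) = e0 := by
        show ((g : Q) ^ i)⁻¹ • e0 = e0
        exact hfix _ (Subgroup.zpow_mem E g.2 i)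
      rw [this]
    rw [hmul, Pi.add_apply, Pi.sub_apply, hsm] at h1
    have hcoe : ∀ k : ℤ, ((g ^ k : ↥E) : Q) = (g : Q) ^ k := fun k =>
      SubgroupClass.coe_zpow g k
    have hval : ∀ (k : ℤ) (hk : (g : Q) ^ k ∈ Subgroup.zpowers (g : Q)),
        (if h : ((g ^ k : ↥E) : Q) ∈ Subgroup.zpowers (g : Q)
          then a ⟨((g ^ k : ↥E) : Q), h⟩ e0 else 0) = a ⟨(g : Q) ^ k, hk⟩ e0 := by
      intro k hk
      have hk' : ((g ^ k : ↥E) : Q) ∈ Subgroup.zpowers (g : Q) := by rw [hcoe k]; exact hk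
      rw [dif_pos hk']
      exact congrFun (congrArg a (Subtype.ext (hcoe k))) e0
    show c (g ^ i) (g ^ j) =
      (if h : ((g ^ j : ↥E) : Q) ∈ Subgroup.zpowers (g : Q)
          then a ⟨((g ^ j : ↥E) : Q), h⟩ e0 else 0)
      - (if h : ((g ^ (i + j) : ↥E) : Q) ∈ Subgroup.zpowers (g : Q)
          then a ⟨((g ^ (i + j) : ↥E) : Q), h⟩ e0 else 0)
      + (if h : ((g ^ i : ↥E) : Q) ∈ Subgroup.zpowers (g : Q)
          then a ⟨((g ^ i : ↥E) : Q), h⟩ e0 else 0)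
    rw [hval i mi, hval j mj, hval (i + j) mij]
    have hcc : c (g ^ i) (g ^ j) = f ((g : Q) ^ i) ((g : Q) ^ j) e0 := by
      rw [hcdef]; simp only [hcoe]
    rw [hcc]
    exact h1
  obtain ⟨βE, hβE⟩ := step2 c hcE hcycE
  -- extend β to Q
  set β : Q → ℤ := fun q => if h : q ∈ E then βE ⟨q, h⟩ else 0 with hβdef
  have hβ : ∀ (a b : Q) (ha : a ∈ E) (hb : b ∈ E),
      f a b e0 = β b - β (a * b) + β a := by
    intro a b ha hb
    have h1 := hβE ⟨a, ha⟩ ⟨b, hb⟩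
    have h2 : c ⟨a, ha⟩ ⟨b, hb⟩ = f a b e0 := rfl
    rw [h2] at h1
    simp only [hβdef]
    rw [dif_pos ha, dif_pos hb, dif_pos (mul_mem ha hb)]
    exact h1
  -- the coboundary
  set u : Q → (Q ⧸ E) → ℤ := fun g x =>
    β ((s x)⁻¹ * g * s (g⁻¹ • x))
    - f (s x) ((s x)⁻¹ * g) x
    - f ((s x)⁻¹ * g * s (g⁻¹ • x)) (s (g⁻¹ • x))⁻¹ e0
    + f (s (g⁻¹ • x))⁻¹ (s (g⁻¹ • x)) e0
    + f 1 1 e0 with hudef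
  refine ⟨u, ?_⟩
  intro g h
  funext x
  rw [Pi.add_apply, Pi.sub_apply, funAction_smul_apply]
  have F0 : (g * h)⁻¹ • x = h⁻¹ • (g⁻¹ • x) := by rw [mul_inv_rev, mul_smul]
  have he1 : (s x)⁻¹ * g * s (g⁻¹ • x) ∈ E := hmem g x
  have he2 : (s (g⁻¹ • x))⁻¹ * h * s (h⁻¹ • (g⁻¹ • x)) ∈ E := hmem h (g⁻¹ • x)
  have hfe1 : ((s x)⁻¹ * g * s (g⁻¹ • x))⁻¹ • e0 = e0 := hfix _ he1
  have hprod : (s x)⁻¹ * (g * h) * s (h⁻¹ • (g⁻¹ • x))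
      = ((s x)⁻¹ * g * s (g⁻¹ • x)) *
        ((s (g⁻¹ • x))⁻¹ * h * s (h⁻¹ • (g⁻¹ • x))) := by group
  have C1 := hco (s x) ((s x)⁻¹ * g) h x
  rw [hsx x, mul_inv_cancel_left, mul_assoc] at C1
  have C2 := hco ((s x)⁻¹ * g * s (g⁻¹ • x)) (s (g⁻¹ • x))⁻¹ h e0
  have hE1q : ((s x)⁻¹ * g * s (g⁻¹ • x)) * (s (g⁻¹ • x))⁻¹ = (s x)⁻¹ * g := by group
  rw [hfe1, hE1q] at C2
  have C3 := hco ((s x)⁻¹ * g * s (g⁻¹ • x))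
    ((s (g⁻¹ • x))⁻¹ * h * s (h⁻¹ • (g⁻¹ • x))) (s (h⁻¹ • (g⁻¹ • x)))⁻¹ e0
  have hE2r : ((s (g⁻¹ • x))⁻¹ * h * s (h⁻¹ • (g⁻¹ • x))) * (s (h⁻¹ • (g⁻¹ • x)))⁻¹
      = (s (g⁻¹ • x))⁻¹ * h := by group
  rw [hfe1, hE2r] at C3
  have C4 := hco (s (g⁻¹ • x))⁻¹ (s (g⁻¹ • x)) ((s (g⁻¹ • x))⁻¹ * h) e0
  rw [inv_inv, hsy (g⁻¹ • x), inv_mul_cancel, mul_inv_cancel_left] at C4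
  have Fone : f 1 ((s (g⁻¹ • x))⁻¹ * h) e0 = f 1 1 e0 := by
    have h5 := hco 1 1 ((s (g⁻¹ • x))⁻¹ * h) e0
    rw [inv_one, one_smul, one_mul, one_mul] at h5
    linarith
  have Hb : f ((s x)⁻¹ * g * s (g⁻¹ • x))
      ((s (g⁻¹ • x))⁻¹ * h * s (h⁻¹ • (g⁻¹ • x))) e0
      = β ((s (g⁻¹ • x))⁻¹ * h * s (h⁻¹ • (g⁻¹ • x)))
        - β (((s x)⁻¹ * g * s (g⁻¹ • x)) *
            ((s (g⁻¹ • x))⁻¹ * h * s (h⁻¹ • (g⁻¹ • x))))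
        + β ((s x)⁻¹ * g * s (g⁻¹ • x)) := hβ _ _ he1 he2
  simp only [hudef]
  rw [F0, hprod]
  linarith [C1, C2, C3, C4, Fone, Hb]


end Normic
end
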